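/- There exists a constant C > 0 with the following property. For all m ∈ ℕ, all j with ⌊m/2⌋ + 1 ≤ j ≤ m, all i, s with 1 ≤ i, s ≤ j, all multi-indices α, β ∈ ℕ₀³ with |α| = m, |β| = j, β ≤ α, and all (k₁,…,k_s; λ₁,…,λ_s) ∈ P_s(i,β), the quantity 𝒟 = binom(α, β) · (i−3)! (m−j−2)!^{1/4} (m−j)!^{3/4} |β|! / ((m−3)!(m−j+1)^{1/4}(m−j+3)^{3/4}) · (|λ_s|−1)!^{3(k_s−1)/4} (|λ_s|−3)!^{(k_s−1)/4} (|λ_s|−3)! / (k_s! (|λ_s|!)^{k_s}) · ∏_{l=1}^{s−1} (|λ_l|−1)!^{3k_l/4} (|λ_l|−3)!^{k_l/4} / (k_l! (|λ_l|!)^{k_l}) satisfies 𝒟 ≤ C · (i!/(k₁!⋯k_s!)) · i³. -/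

import Mathlib

open MeasureTheory Finset

noncomputable section

/-- Points of `ℝ³`. -/
abbrev Vec3 := Fin 3 → ℝ

/-- Multi-indices in `ℕ₀³`. -/
abbrev MIdx := Fin 3 → ℕ

/-- Total degree `|α|` of a multi-index. -/
def wt (α : MIdx) : ℕ := ∑ i, α i

/-- Multi-index factorial `α! = α₁!α₂!α₃!`. -/
def mfact (α : MIdx) : ℕ := ∏ i, Nat.factorial (α i)

variable {E : Type*} [NormedAddCommGroup E] [NormedSpace ℝ E]

/-- Partial derivative `∂_i`. -/
def pd (i : Fin 3) (f : Vec3 → E) : Vec3 → E :=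
  fun x => fderiv ℝ f x (Pi.single i 1)

/-- Iterated partial derivative `∂^α`. -/
def pda (α : MIdx) (f : Vec3 → E) : Vec3 → E :=
  (pd 0)^[α 0] ((pd 1)^[α 1] ((pd 2)^[α 2] f))

/-- The `L²(ℝ³)` norm. -/
def l2 (f : Vec3 → E) : ℝ := (eLpNorm f 2 volume).toReal

/-- The summand family of the analytic norm `‖·‖_{A(τ)}`
(with the convention `n! = 1` for `n < 0`, realized by truncated subtraction). -/
def AFam (τ : ℝ) (u : Vec3 → E) : MIdx → ℝ :=
  fun α => τ ^ wt α / (Nat.factorial (wt α - 3)) * l2 (pda α u)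

/-- The analytic norm `‖u‖_{A(τ)} = Σ_m Σ_{|α|=m} (τ^m/(m-3)!) ‖∂^α u‖_{L²}`. -/
def anorm (τ : ℝ) (u : Vec3 → E) : ℝ := ∑' α : MIdx, AFam τ u α

/-- The summand family of the dissipative analytic norm `‖·‖_{Ã(τ)}`. -/
def DFam (τ : ℝ) (u : Vec3 → E) : MIdx → ℝ :=
  fun α => (wt α) * τ ^ (wt α - 1) / (Nat.factorial (wt α - 3)) * l2 (pda α u)

/-- The dissipative analytic norm `‖u‖_{Ã(τ)} = Σ_{m≥1} Σ_{|α|=m} (m τ^{m-1}/(m-3)!) ‖∂^α u‖_{L²}`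
(the `m = 0` term vanishes since it carries the factor `m`). -/
def danorm (τ : ℝ) (u : Vec3 → E) : ℝ := ∑' α : MIdx, DFam τ u α

/-- Time derivative `∂_t` of a time-dependent function. -/
def tderiv (f : ℝ → Vec3 → E) : ℝ → Vec3 → E := fun t x => deriv (fun s => f s x) t

/-- The pair `u = (p, v)`. -/
def pairF (p : Vec3 → ℝ) (v : Vec3 → Vec3) : Vec3 → ℝ × Vec3 := fun x => (p x, v x)

/-- `(p, v)` solves the symmetrized isentropic Euler system
`E(εu)(∂_t u + v·∇u) + (1/ε) L(∂_x) u = 0` on `[0, T]`, componentwise: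
`a(εp)(∂_t p + v·∇p) + (1/ε) div v = 0` and `r(εp)(∂_t v + v·∇v) + (1/ε) ∇p = 0`. -/
def IsEulerSol (a r : ℝ → ℝ) (ε : ℝ) (p : ℝ → Vec3 → ℝ) (v : ℝ → Vec3 → Vec3)
    (T : ℝ) : Prop :=
  ∀ t ∈ Set.Icc (0:ℝ) T, ∀ x : Vec3,
    (a (ε * p t x) * (tderiv p t x + ∑ i, v t x i * pd i (p t) x)
      + (1/ε) * ∑ i, pd i (fun y => v t y i) x = 0)
    ∧ ∀ j, r (ε * p t x) * (tderiv v t x j + ∑ i, v t x i * pd i (fun y => v t y j) x)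
      + (1/ε) * pd j (p t) x = 0

/-- Smoothness of a time dependent pair `(p, v)` in space and time. -/
def Smooth2 (p : ℝ → Vec3 → ℝ) (v : ℝ → Vec3 → Vec3) : Prop :=
  (∀ t, ContDiff ℝ (⊤ : ℕ∞) (p t)) ∧ (∀ t, ContDiff ℝ (⊤ : ℕ∞) (v t)) ∧
  (∀ x, ContDiff ℝ (⊤ : ℕ∞) (fun t => p t x)) ∧ (∀ x, ContDiff ℝ (⊤ : ℕ∞) (fun t => v t x))

/-- The initial data bound `Σ_m Σ_{|α|=m} (τ₀^m/(m−3)!) ‖∂^α u₀‖_{L²} ≤ M₀`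
(finiteness of the sum included). -/
def InitBound (τ₀ M₀ : ℝ) (u₀ : Vec3 → ℝ × Vec3) : Prop :=
  Summable (AFam τ₀ u₀) ∧ anorm τ₀ u₀ ≤ M₀

/-- The linear order `α ≺ β` on multi-indices: `|α| < |β|`, or `|α| = |β|`
and `α` precedes `β` lexicographically. -/
def mlt (α β : MIdx) : Prop :=
  wt α < wt β ∨ (wt α = wt β ∧ ∃ k : Fin 3, (∀ j, j < k → α j = β j) ∧ α k < β k)

/-- The index set `P_s(i, β)` of the multivariate Faà di Bruno formula: tuples
`(k₁,…,k_s; λ₁,…,λ_s)` with `k_l ∈ ℕ`, `λ_l ∈ ℕ₀³`, `0 ≺ λ₁ ≺ ⋯ ≺ λ_s`,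
`Σ k_l = i` and `Σ k_l λ_l = β`. -/
def Pset (s i : ℕ) (β : MIdx) : Set ((Fin s → ℕ) × (Fin s → MIdx)) :=
  {kl | (∀ l, 0 < kl.1 l) ∧ (∀ l, mlt 0 (kl.2 l)) ∧
    (∀ l l', l < l' → mlt (kl.2 l) (kl.2 l')) ∧
    (∑ l, kl.1 l = i) ∧ (∑ l, kl.1 l • kl.2 l = β)}

/-- The operator `w ↦ E(εu)⁻¹ L(∂_x) w = (a(εp)⁻¹ div w₂, r(εp)⁻¹ ∇w₁)`. -/
def EinvL (a r : ℝ → ℝ) (ε : ℝ) (p : Vec3 → ℝ) (w : Vec3 → ℝ × Vec3) :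
    Vec3 → ℝ × Vec3 :=
  fun x => ((a (ε * p x))⁻¹ * ∑ i, pd i (fun y => (w y).2 i) x,
            fun j => (r (ε * p x))⁻¹ * pd j (fun y => (w y).1) x)


-- ===== auxiliary lemmas for statement14 =====

lemma st14_choose2 (a b c d : ℕ) : a.choose c * b.choose d ≤ (a+b).choose (c+d) := by
  rw [Nat.add_choose_eq]
  exact Finset.single_le_sum (f := fun ij : ℕ × ℕ => a.choose ij.1 * b.choose ij.2)
    (fun _ _ => Nat.zero_le _) (a := (c,d)) (by simp [Finset.mem_antidiagonal])

lemma st14_prod_choose (α β : MIdx) :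
    (∏ c, (α c).choose (β c)) ≤ (wt α).choose (wt β) := by
  rw [wt, wt, Fin.sum_univ_three, Fin.sum_univ_three, Fin.prod_univ_three]
  calc (α 0).choose (β 0) * (α 1).choose (β 1) * (α 2).choose (β 2)
      ≤ (α 0 + α 1).choose (β 0 + β 1) * (α 2).choose (β 2) :=
        Nat.mul_le_mul_right _ (st14_choose2 _ _ _ _)
    _ ≤ (α 0 + α 1 + α 2).choose (β 0 + β 1 + β 2) := st14_choose2 _ _ _ _

lemma st14_nat2 (n : ℕ) (hn : 1 ≤ n) : n^3 * (n-3).factorial ≤ 6 * n.factorial := by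
  match n, hn with
  | 1, _ => decide
  | 2, _ => decide
  | (k+3), _ =>
    have h : (k+3).factorial = (k+3)*((k+2)*((k+1)*k.factorial)) := by
      simp [Nat.factorial_succ]
    rw [h, show k+3-3 = k by omega]
    have h2 : (k+3)*((k+2)*((k+1)*k.factorial)) = ((k+3)*(k+2)*(k+1)) * k.factorial := by ring
    rw [h2, ← Nat.mul_assoc]
    exact Nat.mul_le_mul_right _ (by nlinarith [sq_nonneg k, sq_nonneg (k+1)])

lemma st14_nat3 (m i N : ℕ) (hm : m ≤ 2*(i*N)) (hN : 1 ≤ N) :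
    m^3 * (i-3).factorial * (N-3).factorial ≤ 48 * i.factorial * i^3 * N.factorial := by
  calc m^3 * (i-3).factorial * (N-3).factorial
      ≤ (2*(i*N))^3 * i.factorial * (N-3).factorial :=
        Nat.mul_le_mul_right _ (Nat.mul_le_mul (Nat.pow_le_pow_left hm 3)
          (Nat.factorial_le (Nat.sub_le i 3)))
    _ = (8 * i^3 * i.factorial) * (N^3 * (N-3).factorial) := by ring
    _ ≤ (8 * i^3 * i.factorial) * (6 * N.factorial) := Nat.mul_le_mul_left _ (st14_nat2 N hN)
    _ = 48 * i.factorial * i^3 * N.factorial := by ring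

lemma st14_wt_le {a b : MIdx} (h : mlt a b) : wt a ≤ wt b := by
  rcases h with h | ⟨h, _⟩
  · exact h.le
  · exact h.le

lemma st14_wt_pos {b : MIdx} (h : mlt 0 b) : 1 ≤ wt b := by
  rcases h with h | ⟨h, k, _, hk⟩
  · have h' : 0 < wt b := by simpa [wt] using h
    omega
  · have h1 : b k ≤ wt b := Finset.single_le_sum (f := fun c => b c)
      (fun _ _ => Nat.zero_le _) (Finset.mem_univ k)
    simp only [Pi.zero_apply] at hk
    omega


local notation "fac" x => ((Nat.factorial x : ℕ) : ℝ)

lemma one_le_rpow4 (x : ℕ) (hx : 1 ≤ x) (e : ℝ) (he : 0 ≤ e) : (1:ℝ) ≤ (x:ℝ) ^ e := by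
  calc (1:ℝ) = (1:ℝ) ^ e := (Real.one_rpow e).symm
    _ ≤ (x:ℝ) ^ e := Real.rpow_le_rpow zero_le_one (by exact_mod_cast hx) he

lemma Bl_bound (k n : ℕ) (hk : 1 ≤ k) :
    ((fac (n-1)) ^ ((3 * (k:ℝ)) / 4) * (fac (n-3)) ^ ((k:ℝ) / 4)) /
      ((fac k) * (fac n) ^ k) ≤ 1 / (fac k) := by
  have h13 : (fac (n-3)) ≤ (fac (n-1)) := by
    exact_mod_cast Nat.factorial_le (by omega)
  have hnum : (fac (n-1)) ^ ((3 * (k:ℝ)) / 4) * (fac (n-3)) ^ ((k:ℝ) / 4) ≤ (fac n) ^ k := by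
    calc (fac (n-1)) ^ ((3 * (k:ℝ)) / 4) * (fac (n-3)) ^ ((k:ℝ) / 4)
        ≤ (fac (n-1)) ^ ((3 * (k:ℝ)) / 4) * (fac (n-1)) ^ ((k:ℝ) / 4) := by
          gcongr <;>
            first
              | positivity
              | omega
              | linarith
              | exact_mod_cast Nat.factorial_le (by omega)
              | exact_mod_cast Nat.one_le_iff_ne_zero.mpr (Nat.factorial_ne_zero _)
    _ = (fac (n-1)) ^ ((k:ℕ):ℝ) := by
          rw [← Real.rpow_add (by positivity)]; congr 1; push_cast; ring
    _ = (fac (n-1)) ^ k := Real.rpow_natCast _ k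
    _ ≤ (fac n) ^ k := by
          gcongr <;>
            first
              | positivity
              | omega
              | linarith
              | exact_mod_cast Nat.factorial_le (by omega)
              | exact_mod_cast Nat.one_le_iff_ne_zero.mpr (Nat.factorial_ne_zero _)
  rw [div_le_div_iff₀ (by positivity) (by positivity)]
  calc ((fac (n-1)) ^ ((3 * (k:ℝ)) / 4) * (fac (n-3)) ^ ((k:ℝ) / 4)) * (fac k)
      ≤ ((fac n) ^ k) * (fac k) := by
        exact mul_le_mul_of_nonneg_right hnum (by positivity)
    _ = 1 * ((fac k) * (fac n) ^ k) := by ring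

lemma Bs_bound (k n : ℕ) (hk : 1 ≤ k) :
    ((fac (n-1)) ^ ((3 * ((k:ℝ) - 1)) / 4) * (fac (n-3)) ^ (((k:ℝ) - 1) / 4) * (fac (n-3))) /
      ((fac k) * (fac n) ^ k) ≤ (fac (n-3)) / ((fac k) * (fac n)) := by
  have he : (0:ℝ) ≤ (k:ℝ) - 1 := by
    have : (1:ℝ) ≤ (k:ℝ) := by exact_mod_cast hk
    linarith
  have hnum : (fac (n-1)) ^ ((3 * ((k:ℝ) - 1)) / 4) * (fac (n-3)) ^ (((k:ℝ) - 1) / 4)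
      ≤ (fac n) ^ (k-1) := by
    calc (fac (n-1)) ^ ((3 * ((k:ℝ) - 1)) / 4) * (fac (n-3)) ^ (((k:ℝ) - 1) / 4)
        ≤ (fac (n-1)) ^ ((3 * ((k:ℝ) - 1)) / 4) * (fac (n-1)) ^ (((k:ℝ) - 1) / 4) := by
          gcongr <;>
            first
              | positivity
              | omega
              | linarith
              | exact_mod_cast Nat.factorial_le (by omega)
              | exact_mod_cast Nat.one_le_iff_ne_zero.mpr (Nat.factorial_ne_zero _)
      _ = (fac (n-1)) ^ (((k-1:ℕ)):ℝ) := by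
          rw [← Real.rpow_add (by positivity)]; congr 1
          rw [Nat.cast_sub hk]; push_cast; ring
      _ = (fac (n-1)) ^ (k-1) := Real.rpow_natCast _ (k-1)
      _ ≤ (fac n) ^ (k-1) := by
          gcongr <;>
            first
              | positivity
              | omega
              | linarith
              | exact_mod_cast Nat.factorial_le (by omega)
              | exact_mod_cast Nat.one_le_iff_ne_zero.mpr (Nat.factorial_ne_zero _)
  rw [div_le_div_iff₀ (by positivity) (by positivity)]
  have hpk : ((fac n) : ℝ) ^ k = (fac n) ^ (k-1) * (fac n) := by
    conv_lhs => rw [show k = (k-1)+1 by omega]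
    rw [pow_succ]
  calc ((fac (n-1)) ^ ((3 * ((k:ℝ) - 1)) / 4) * (fac (n-3)) ^ (((k:ℝ) - 1) / 4) * (fac (n-3)))
        * ((fac k) * (fac n))
      ≤ ((fac n) ^ (k-1) * (fac (n-3))) * ((fac k) * (fac n)) := by
        apply mul_le_mul_of_nonneg_right _ (by positivity)
        exact mul_le_mul_of_nonneg_right hnum (by positivity)
    _ = (fac (n-3)) * ((fac k) * ((fac n) ^ (k-1) * (fac n))) := by ring
    _ = (fac (n-3)) * ((fac k) * (fac n) ^ k) := by rw [← hpk]

lemma A_bound (m j i : ℕ) (hj : j ≤ m) (hm : 1 ≤ m) (P : ℝ) (hP0 : 0 ≤ P)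
    (hP : P ≤ (m.choose j : ℝ)) :
    P * ((Nat.factorial (i - 3) : ℝ) * (Nat.factorial (m - j - 2) : ℝ) ^ ((1:ℝ)/4) *
        (Nat.factorial (m - j) : ℝ) ^ ((3:ℝ)/4) * (Nat.factorial j : ℝ)) /
      ((Nat.factorial (m - 3) : ℝ) * ((m - j + 1 : ℕ) : ℝ) ^ ((1:ℝ)/4) *
        ((m - j + 3 : ℕ) : ℝ) ^ ((3:ℝ)/4)) ≤
    (m:ℝ)^3 * (Nat.factorial (i - 3) : ℝ) := by
  have hfacpos : ∀ x : ℕ, (0:ℝ) < (Nat.factorial x : ℝ) := fun x => by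
    exact_mod_cast (Nat.factorial_pos x)
  have nat1 : m.factorial ≤ m^3 * (m-3).factorial := by
    match m, hm with
    | 1, _ => decide
    | 2, _ => decide
    | (k+3), _ =>
      have h : (k+3).factorial = (k+3)*((k+2)*((k+1)*k.factorial)) := by
        simp [Nat.factorial_succ]
      rw [h, show k+3-3 = k by omega]
      have h2 : (k+3)*((k+2)*((k+1)*k.factorial)) = ((k+3)*(k+2)*(k+1)) * k.factorial := by ring
      rw [h2]
      exact Nat.mul_le_mul_right _ (by nlinarith)
  have hc1 : (1:ℝ) ≤ ((m - j + 1 : ℕ) : ℝ) ^ ((1:ℝ)/4) := by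
    calc (1:ℝ) = (1:ℝ) ^ ((1:ℝ)/4) := (Real.one_rpow _).symm
      _ ≤ _ := Real.rpow_le_rpow zero_le_one (by exact_mod_cast Nat.le_add_left 1 (m-j)) (by norm_num)
  have hc2 : (1:ℝ) ≤ ((m - j + 3 : ℕ) : ℝ) ^ ((3:ℝ)/4) := by
    calc (1:ℝ) = (1:ℝ) ^ ((3:ℝ)/4) := (Real.one_rpow _).symm
      _ ≤ _ := Real.rpow_le_rpow zero_le_one (by exact_mod_cast by omega) (by norm_num)
  have hc3 : (Nat.factorial (m - j - 2) : ℝ) ^ ((1:ℝ)/4) ≤ (Nat.factorial (m - j) : ℝ) ^ ((1:ℝ)/4) :=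
    Real.rpow_le_rpow (by positivity) (by exact_mod_cast Nat.factorial_le (by omega)) (by norm_num)
  have hfacts : (m.choose j : ℝ) * (Nat.factorial j : ℝ) * (Nat.factorial (m-j) : ℝ)
      = (Nat.factorial m : ℝ) := by exact_mod_cast Nat.choose_mul_factorial_mul_factorial hj
  have hXY : (Nat.factorial (m-j) : ℝ) ^ ((1:ℝ)/4) * (Nat.factorial (m-j) : ℝ) ^ ((3:ℝ)/4)
      = (Nat.factorial (m-j) : ℝ) := by
    rw [← Real.rpow_add (hfacpos _)]; norm_num
  calc P * ((Nat.factorial (i - 3) : ℝ) * (Nat.factorial (m - j - 2) : ℝ) ^ ((1:ℝ)/4) *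
        (Nat.factorial (m - j) : ℝ) ^ ((3:ℝ)/4) * (Nat.factorial j : ℝ)) /
      ((Nat.factorial (m - 3) : ℝ) * ((m - j + 1 : ℕ) : ℝ) ^ ((1:ℝ)/4) *
        ((m - j + 3 : ℕ) : ℝ) ^ ((3:ℝ)/4))
      ≤ (m.choose j : ℝ) * ((Nat.factorial (i - 3) : ℝ) * (Nat.factorial (m - j) : ℝ) ^ ((1:ℝ)/4) *
        (Nat.factorial (m - j) : ℝ) ^ ((3:ℝ)/4) * (Nat.factorial j : ℝ)) /
      ((Nat.factorial (m - 3) : ℝ) * 1 * 1) := by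
        gcongr <;> first | exact hP | exact hc3 | exact hc1 | exact hc2 | positivity
    _ = ((m.choose j : ℝ) * (Nat.factorial j : ℝ) *
          ((Nat.factorial (m-j) : ℝ) ^ ((1:ℝ)/4) * (Nat.factorial (m-j) : ℝ) ^ ((3:ℝ)/4))) *
          (Nat.factorial (i-3) : ℝ) / (Nat.factorial (m - 3) : ℝ) := by
        rw [mul_one, mul_one]; ring
    _ = (Nat.factorial m : ℝ) * (Nat.factorial (i-3) : ℝ) / (Nat.factorial (m - 3) : ℝ) := by
        rw [hXY, hfacts]
    _ ≤ (m:ℝ)^3 * (Nat.factorial (i - 3) : ℝ) := by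
        rw [div_le_iff₀ (hfacpos _)]
        have h : (Nat.factorial m : ℝ) ≤ (m:ℝ)^3 * (Nat.factorial (m-3) : ℝ) := by
          exact_mod_cast nat1
        nlinarith [hfacpos (i-3), hfacpos (m-3), (hfacpos (i-3)).le]

/-- there is `C > 0` such that for `⌊m/2⌋+1 ≤ j ≤ m`, `1 ≤ i, s ≤ j`,
`|α| = m`, `|β| = j`, `β ≤ α` and `(k₁,…,k_s; λ₁,…,λ_s) ∈ P_s(i,β)`, the quantity `𝒟`
(as displayed) satisfies `𝒟 ≤ C (i!/(k₁!⋯k_s!)) i³`. -/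
theorem statement14 :
    ∃ C : ℝ, 0 < C ∧ ∀ m j i s : ℕ, m / 2 + 1 ≤ j → j ≤ m → 1 ≤ i → i ≤ j →
      ∀ hs : 1 ≤ s, s ≤ j →
      ∀ α β : MIdx, wt α = m → wt β = j → (∀ c, β c ≤ α c) →
      ∀ kl : (Fin s → ℕ) × (Fin s → MIdx), kl ∈ Pset s i β →
        (∏ c, (Nat.choose (α c) (β c) : ℝ)) *
          ((Nat.factorial (i - 3) : ℝ) * (Nat.factorial (m - j - 2) : ℝ) ^ ((1:ℝ)/4) *
            (Nat.factorial (m - j) : ℝ) ^ ((3:ℝ)/4) * (Nat.factorial (wt β) : ℝ)) /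
          ((Nat.factorial (m - 3) : ℝ) * ((m - j + 1 : ℕ) : ℝ) ^ ((1:ℝ)/4) *
            ((m - j + 3 : ℕ) : ℝ) ^ ((3:ℝ)/4)) *
          (((Nat.factorial (wt (kl.2 ⟨s - 1, by omega⟩) - 1) : ℝ) ^
              ((3 * ((kl.1 ⟨s - 1, by omega⟩ : ℝ) - 1)) / 4) *
            (Nat.factorial (wt (kl.2 ⟨s - 1, by omega⟩) - 3) : ℝ) ^
              (((kl.1 ⟨s - 1, by omega⟩ : ℝ) - 1) / 4) *
            (Nat.factorial (wt (kl.2 ⟨s - 1, by omega⟩) - 3) : ℝ)) /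
            ((Nat.factorial (kl.1 ⟨s - 1, by omega⟩) : ℝ) *
              (Nat.factorial (wt (kl.2 ⟨s - 1, by omega⟩)) : ℝ) ^ (kl.1 ⟨s - 1, by omega⟩))) *
          ∏ l ∈ Finset.univ.erase (⟨s - 1, by omega⟩ : Fin s),
            ((Nat.factorial (wt (kl.2 l) - 1) : ℝ) ^ ((3 * (kl.1 l : ℝ)) / 4) *
              (Nat.factorial (wt (kl.2 l) - 3) : ℝ) ^ ((kl.1 l : ℝ) / 4)) /
            ((Nat.factorial (kl.1 l) : ℝ) * (Nat.factorial (wt (kl.2 l)) : ℝ) ^ (kl.1 l))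
        ≤ C * ((Nat.factorial i : ℝ) / ∏ l : Fin s, (Nat.factorial (kl.1 l) : ℝ)) *
            (i : ℝ) ^ 3 := by
  classical
  refine ⟨48, by norm_num, ?_⟩
  intro m j i s hj1 hj2 hi1 hi2 hs hsj α β hα hβj hβα kl hkl
  obtain ⟨hkpos, h0lt, hord, hksum, hklsum⟩ := hkl
  have hlastlt : s - 1 < s := by omega
  set last : Fin s := ⟨s - 1, hlastlt⟩ with hlastdef
  set N := wt (kl.2 last) with hNdef
  set ks := kl.1 last with hksdef
  have hN1 : 1 ≤ N := st14_wt_pos (h0lt last)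
  have hks1 : 1 ≤ ks := hkpos last
  have hwt_le : ∀ l, wt (kl.2 l) ≤ N := by
    intro l
    by_cases hl : l = last
    · rw [hl]
    · have hlv : (l : ℕ) < s - 1 := by
        have := l.isLt
        have : (l : ℕ) ≠ s - 1 := fun hc => hl (Fin.ext hc)
        omega
      exact st14_wt_le (hord l last hlv)
  have hjsum : j = ∑ l, kl.1 l * wt (kl.2 l) := by
    have h1 := congrArg wt hklsum
    rw [hβj] at h1
    rw [← h1]
    simp only [wt, Finset.sum_apply, Pi.smul_apply, smul_eq_mul, Finset.mul_sum]
    exact Finset.sum_comm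
  have hjN : j ≤ i * N := by
    rw [hjsum, ← hksum, Finset.sum_mul]
    exact Finset.sum_le_sum fun l _ => Nat.mul_le_mul_left _ (hwt_le l)
  have hm2iN : m ≤ 2 * (i * N) := by omega
  have hm1 : 1 ≤ m := by omega
  have hPle : (∏ c, ((α c).choose (β c) : ℝ)) ≤ (m.choose j : ℝ) := by
    have := st14_prod_choose α β
    rw [hα, hβj] at this
    exact_mod_cast this
  have hA := A_bound m j i hj2 hm1 (∏ c, ((α c).choose (β c) : ℝ)) (by positivity) hPle
  have hBs := Bs_bound ks N hks1
  rw [hβj]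
  refine le_trans (mul_le_mul (mul_le_mul hA hBs (by positivity) (by positivity))
    (Finset.prod_le_prod (fun l _ => by positivity)
      (fun l hl => Bl_bound (kl.1 l) (wt (kl.2 l)) (hkpos l)))
    (Finset.prod_nonneg fun l _ => by positivity) (by positivity)) ?_
  have hQrw : (∏ l : Fin s, (Nat.factorial (kl.1 l) : ℝ)) =
      (Nat.factorial ks : ℝ) * ∏ l ∈ Finset.univ.erase last, (Nat.factorial (kl.1 l) : ℝ) :=
    (Finset.mul_prod_erase Finset.univ _ (Finset.mem_univ last)).symm
  have hprod1 : (∏ l ∈ Finset.univ.erase last, (1 / (Nat.factorial (kl.1 l) : ℝ))) =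
      1 / ∏ l ∈ Finset.univ.erase last, (Nat.factorial (kl.1 l) : ℝ) := by
    rw [Finset.prod_div_distrib, Finset.prod_const_one]
  rw [hQrw, hprod1]
  set Q := ∏ l ∈ Finset.univ.erase last, (Nat.factorial (kl.1 l) : ℝ) with hQdef
  have hQpos : 0 < Q := Finset.prod_pos fun l _ => by positivity
  have hkey : (m:ℝ)^3 * (Nat.factorial (i-3) : ℝ) * (Nat.factorial (N-3) : ℝ) ≤
      48 * (Nat.factorial i : ℝ) * (i:ℝ)^3 * (Nat.factorial N : ℝ) := by
    exact_mod_cast st14_nat3 m i N hm2iN hN1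
  calc (m:ℝ)^3 * (Nat.factorial (i - 3) : ℝ) *
        ((Nat.factorial (N-3) : ℝ) / ((Nat.factorial ks : ℝ) * (Nat.factorial N : ℝ))) *
        (1 / Q)
      = ((m:ℝ)^3 * (Nat.factorial (i - 3) : ℝ) * (Nat.factorial (N-3) : ℝ)) /
          (Nat.factorial N : ℝ) * (1 / ((Nat.factorial ks : ℝ) * Q)) := by ring
    _ ≤ (48 * (Nat.factorial i : ℝ) * (i:ℝ)^3) * (1 / ((Nat.factorial ks : ℝ) * Q)) := by
        apply mul_le_mul_of_nonneg_right _ (by positivity)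
        rw [div_le_iff₀ (by positivity)]
        linarith [hkey]
    _ = 48 * ((Nat.factorial i : ℝ) / ((Nat.factorial ks : ℝ) * Q)) * (i:ℝ)^3 := by ring


end
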